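/- If P[i..j] is a MEM with j < m, then the character P[j+1] is contained in the next MEM from the left, i.e., there is a MEM P[i'..j'] with i < i' ≤ j+1 ≤ j'. -/

import Mathlib

open List

variable {α : Type*}

/-- `pseg P i j` is the substring `P[i..j]` (1-based, inclusive). -/
def pseg (P : List α) (i j : ℕ) : List α := (P.take j).drop (i - 1)

/-- `P[i..j]` is a MEM (maximal exact match) of `P` with respect to `T`. -/
def IsMEM (P T : List α) (i j : ℕ) : Prop :=
  1 ≤ i ∧ i ≤ j ∧ j ≤ P.length ∧
  pseg P i j <:+: T ∧
  (i = 1 ∨ ¬ pseg P (i - 1) j <:+: T) ∧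
  (j = P.length ∨ ¬ pseg P i (j + 1) <:+: T)

/-- The maximum length of a prefix of `Q` occurring as a substring of `T`. -/
noncomputable def lcpLen (Q T : List α) : ℕ :=
  sSup {l | l ≤ Q.length ∧ Q.take l <:+: T}

/-- The maximum length of a suffix of `Q` occurring as a substring of `T`. -/
noncomputable def lcsLen (Q T : List α) : ℕ :=
  sSup {l | l ≤ Q.length ∧ Q.drop (Q.length - l) <:+: T}

/-- The length of the longest common suffix of `Q` and `R`. -/
noncomputable def lcsufLen (Q R : List α) : ℕ :=
  sSup {l | l ≤ Q.length ∧ l ≤ R.length ∧ Q.drop (Q.length - l) = R.drop (R.length - l)}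

/-- if `P[i..j]` is a MEM with `j < m`, then `P[j+1]` is contained in the
next MEM from the left. -/
lemma pseg_infix_pseg (P : List α) {a a' b b' : ℕ} (ha : a ≤ a') (hb : b' ≤ b) :
    pseg P a' b' <:+: pseg P a b := by
  unfold pseg
  have h1 : P.take b' = (P.take b).take b' := by rw [List.take_take, min_eq_left hb]
  rw [h1]
  set L := P.take b with hL
  have hpre : (L.take b').drop (a' - 1) <+: L.drop (a' - 1) := by
    rw [List.drop_take]
    exact List.take_prefix _ _
  have hsuf : L.drop (a' - 1) <:+ L.drop (a - 1) := by
    have heq : L.drop (a' - 1) = (L.drop (a - 1)).drop (a' - 1 - (a - 1)) := by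
      rw [List.drop_drop]
      congr 1
      omega
    rw [heq]
    exact List.drop_suffix _ _
  exact hpre.isInfix.trans hsuf.isInfix

lemma pseg_singleton (P : List α) {j : ℕ} (hj : j < P.length) :
    pseg P (j + 1) (j + 1) = [P.get ⟨j, hj⟩] := by
  unfold pseg
  simp only [Nat.add_sub_cancel]
  rw [List.drop_take, Nat.add_sub_cancel_left, List.take_one_drop_eq_of_lt_length hj]

theorem next_char_in_next_mem (P T : List α) (i j : ℕ)
    (hocc : ∀ c ∈ P, [c] <:+: T)
    (h : IsMEM P T i j) (hjm : j < P.length) :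
    ∃ i' j', IsMEM P T i' j' ∧ i < i' ∧ i' ≤ j + 1 ∧ j + 1 ≤ j' := by
  classical
  obtain ⟨hi1, hij, hjP, hoccP, _, hright⟩ := h
  have hright' : ¬ pseg P i (j + 1) <:+: T := by
    rcases hright with h' | h'
    · omega
    · exact h'
  -- the candidate set for i'
  set Q : ℕ → Prop := fun a => i < a ∧ pseg P a (j + 1) <:+: T with hQ
  have hQj : Q (j + 1) := by
    constructor
    · omega
    · rw [pseg_singleton P hjm]
      exact hocc _ (List.get_mem _ _)
  have hex : ∃ a, Q a := ⟨j + 1, hQj⟩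
  set i' := Nat.find hex with hi'
  obtain ⟨hii', hocc' ⟩ : Q i' := Nat.find_spec hex
  have hi'le : i' ≤ j + 1 := Nat.find_le hQj
  -- the candidate set for j'
  set R : ℕ → Prop := fun b => j + 1 ≤ b ∧ pseg P i' b <:+: T with hR
  have hRj : R (j + 1) := ⟨le_refl _, hocc'⟩
  set j' := Nat.findGreatest R P.length with hj'
  have hj'ge : j + 1 ≤ j' := Nat.le_findGreatest (by omega) hRj
  have hj'le : j' ≤ P.length := Nat.findGreatest_le _
  obtain ⟨-, hoccj'⟩ : R j' := Nat.findGreatest_spec (m := j + 1) (by omega) hRj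
  refine ⟨i', j', ⟨by omega, by omega, hj'le, hoccj', ?_, ?_⟩, hii', hi'le, hj'ge⟩
  · -- left maximality
    right
    intro hcon
    have hsh : pseg P (i' - 1) (j + 1) <:+: T :=
      (pseg_infix_pseg P (le_refl _) hj'ge).trans hcon
    rcases Nat.lt_or_ge i (i' - 1) with hlt | hge
    · exact Nat.find_min hex (by omega) ⟨hlt, hsh⟩
    · -- i' - 1 ≤ i, and i < i', so i' - 1 = i
      have : i' - 1 = i := by omega
      rw [this] at hsh
      exact hright' hsh
  · -- right maximality
    rcases Nat.eq_or_lt_of_le hj'le with heq | hlt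
    · left; exact heq
    · right
      intro hcon
      have hng : ¬ R (j' + 1) := Nat.findGreatest_is_greatest (n := P.length) (by omega) (by omega)
      exact hng ⟨by omega, hcon⟩
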